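/- arXiv:1903.10328 — 5 statements merged into one kernel-verified Lean document; each statement's English description precedes it below -/
import Mathlib

section
/- Let f : ℝ^d → ℝ be continuously differentiable and nonnegative, let m > 0 and b ≥ 0, and suppose the dissipativity condition ⟨x, ∇f(x)⟩ ≥ m‖x‖² − b holds for all x ∈ ℝ^d. Then for every x ∈ ℝ^d one has f(x) ≥ (m/3)‖x‖² − (b/2)·log 3. -/
open scoped InnerProductSpace

/-- If `f : ℝ^d → ℝ` is `C¹`, nonnegative, and satisfies the
dissipativity condition `⟨x, ∇f(x)⟩ ≥ m‖x‖² − b`, then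
`f(x) ≥ (m/3)‖x‖² − (b/2)·log 3`. -/
theorem quadratic_lower_bound {d : ℕ} (f : EuclideanSpace ℝ (Fin d) → ℝ) (m b : ℝ)
    (hf : ContDiff ℝ 1 f) (hfnn : ∀ x, 0 ≤ f x) (hm : 0 < m) (hb : 0 ≤ b)
    (hdis : ∀ x : EuclideanSpace ℝ (Fin d), ⟪x, gradient f x⟫_ℝ ≥ m * ‖x‖ ^ 2 - b) :
    ∀ x : EuclideanSpace ℝ (Fin d), f x ≥ m / 3 * ‖x‖ ^ 2 - b / 2 * Real.log 3 := by
  intro x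
  have hdiff : Differentiable ℝ f := hf.differentiable one_ne_zero
  have hfd : ∀ y, fderiv ℝ f y x = ⟪x, gradient f y⟫_ℝ := fun y => by
    rw [((hdiff y).hasGradientAt.hasFDerivAt).fderiv, InnerProductSpace.toDual_apply_apply,
      real_inner_comm]
  set c : ℝ := (Real.sqrt 3)⁻¹ with hcdef
  have h3 : (0:ℝ) < 3 := by norm_num
  have hs3 : (1:ℝ) < Real.sqrt 3 := by
    rw [show (1:ℝ) = Real.sqrt 1 by simp]
    exact Real.sqrt_lt_sqrt (by norm_num) (by norm_num)
  have hc0 : 0 < c := by positivity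
  have hc1 : c < 1 := by
    rw [hcdef, inv_lt_one_iff₀]; right; exact hs3
  have hc2 : c ^ 2 = 1 / 3 := by
    rw [hcdef, inv_pow, Real.sq_sqrt (by norm_num : (0:ℝ) ≤ 3)]; norm_num
  have hlogc : Real.log c = -(Real.log 3 / 2) := by
    rw [hcdef, Real.log_inv, Real.log_sqrt (by norm_num : (0:ℝ) ≤ 3)]
  set G : ℝ → ℝ := fun t => f (t • x) - (m / 2 * ‖x‖ ^ 2 * t ^ 2 - b * Real.log t) with hG
  -- derivative of G on positive reals
  have hderiv : ∀ t : ℝ, 0 < t →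
      HasDerivAt G (fderiv ℝ f (t • x) x - (m * ‖x‖ ^ 2 * t - b * t⁻¹)) t := by
    intro t ht
    have h1 : HasDerivAt (fun t : ℝ => f (t • x)) (fderiv ℝ f (t • x) x) t := by
      have hsm : HasDerivAt (fun t : ℝ => t • x) ((1:ℝ) • x) t :=
        (hasDerivAt_id t).smul_const x
      rw [one_smul] at hsm
      exact ((hdiff (t • x)).hasFDerivAt).comp_hasDerivAt t hsm
    have h2 : HasDerivAt (fun t : ℝ => m / 2 * ‖x‖ ^ 2 * t ^ 2 - b * Real.log t)
        (m * ‖x‖ ^ 2 * t - b * t⁻¹) t := by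
      have hp : HasDerivAt (fun t : ℝ => m / 2 * ‖x‖ ^ 2 * t ^ 2)
          (m / 2 * ‖x‖ ^ 2 * (2 * t ^ 1)) t := (hasDerivAt_pow 2 t).const_mul _
      have hl : HasDerivAt (fun t : ℝ => b * Real.log t) (b * t⁻¹) t :=
        (Real.hasDerivAt_log (ne_of_gt ht)).const_mul b
      have := hp.sub hl
      exact this.congr_deriv (by ring)
    exact h1.sub h2
  -- the derivative is nonnegative on positive reals
  have hpos : ∀ t : ℝ, 0 < t →
      0 ≤ fderiv ℝ f (t • x) x - (m * ‖x‖ ^ 2 * t - b * t⁻¹) := by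
    intro t ht
    have hd := hdis (t • x)
    rw [real_inner_smul_left] at hd
    have hn : ‖t • x‖ ^ 2 = t ^ 2 * ‖x‖ ^ 2 := by
      rw [norm_smul, mul_pow, Real.norm_eq_abs, sq_abs]
    rw [hn] at hd
    have hI : t * ⟪x, gradient f (t • x)⟫_ℝ ≥ m * (t ^ 2 * ‖x‖ ^ 2) - b := hd
    rw [hfd]
    have htinv : t * t⁻¹ = 1 := mul_inv_cancel₀ (ne_of_gt ht)
    nlinarith [hI, ht, htinv]
  -- G is monotone on [c, 1]
  have hmono : MonotoneOn G (Set.Icc c 1) := by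
    apply monotoneOn_of_deriv_nonneg (convex_Icc c 1)
    · apply ContinuousOn.sub
      · exact (hf.continuous.comp (continuous_id.smul continuous_const)).continuousOn
      · apply ContinuousOn.sub (Continuous.continuousOn (by continuity))
        exact continuousOn_const.mul (Real.continuousOn_log.mono
          (fun t ht => ne_of_gt (lt_of_lt_of_le hc0 ht.1)))
    · intro t ht
      rw [interior_Icc] at ht
      exact ((hderiv t (lt_trans hc0 ht.1)).differentiableAt).differentiableWithinAt
    · intro t ht
      rw [interior_Icc] at ht
      have ht0 : 0 < t := lt_trans hc0 ht.1
      rw [(hderiv t ht0).deriv]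
      exact hpos t ht0
  have hGle : G c ≤ G 1 := hmono (Set.mem_Icc.2 ⟨le_refl c, le_of_lt hc1⟩)
    (Set.mem_Icc.2 ⟨le_of_lt hc1, le_refl 1⟩) (le_of_lt hc1)
  have hG1 : G 1 = f x - m / 2 * ‖x‖ ^ 2 := by
    simp [hG]
  have hGc : G c = f (c • x) - (m / 2 * ‖x‖ ^ 2 * (1/3) + b * (Real.log 3 / 2)) := by
    simp only [hG, hc2, hlogc]
    ring
  have hfc := hfnn (c • x)
  rw [hG1, hGc] at hGle
  nlinarith [hGle, hfc]
end

section
/- Let μ and ν be probability measures on ℝ^{2d} with finite second moments, and let G : ℝ^{2d} → ℝ be continuously differentiable with ‖∇G(w)‖ ≤ c₁‖w‖ + c₂ for all w, where c₁ > 0 and c₂ ≥ 0. Let p > 1 and q > 1 satisfy 1/p + 1/q = 1, assume ∫‖u‖^q dμ(u) < ∞ and ∫‖v‖^q dν(v) < ∞, and let ξ be any coupling of μ and ν (a probability measure on ℝ^{2d} × ℝ^{2d} whose first marginal is μ and second marginal is ν) with ∫‖u − v‖^p dξ(u,v) < ∞. Then |∫ G dμ − ∫ G dν| ≤ (c₁σ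 + c₂)·(∫‖u − v‖^p dξ(u,v))^{1/p}, where σ = max{(∫‖u‖^q dμ(u))^{1/q}, (∫‖v‖^q dν(v))^{1/q}}. -/
open MeasureTheory
open scoped InnerProductSpace

private lemma mvt_bound {F : Type*} [NormedAddCommGroup F] [InnerProductSpace ℝ F]
    [CompleteSpace F]
    (G : F → ℝ) (c₁ c₂ : ℝ) (hc₁ : 0 ≤ c₁) (hc₂ : 0 ≤ c₂) (hG : ContDiff ℝ 1 G)
    (hgrad : ∀ w, ‖gradient G w‖ ≤ c₁ * ‖w‖ + c₂) (u v : F) :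
    |G u - G v| ≤ c₁ / 2 * (‖u - v‖ * ‖u‖) + c₁ / 2 * (‖u - v‖ * ‖v‖) + c₂ * ‖u - v‖ := by
  set γ : ℝ → F := fun t => v + t • (u - v) with hγdef
  have hγcont : Continuous γ := by fun_prop
  have hγd : ∀ t : ℝ, HasDerivAt γ (u - v) t := fun t => by
    simpa [hγdef] using ((hasDerivAt_id t).smul_const (u - v)).const_add v
  have hφd : ∀ t : ℝ, HasDerivAt (fun s => G (γ s)) (⟪gradient G (γ t), u - v⟫_ℝ) t := by
    intro t
    have h1 : HasFDerivAt G (InnerProductSpace.toDual ℝ F (gradient G (γ t))) (γ t) :=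
      ((hG.differentiable one_ne_zero) (γ t)).hasGradientAt
    simpa [Function.comp_def] using h1.comp_hasDerivAt t (hγd t)
  have hcont : Continuous fun t => ⟪gradient G (γ t), u - v⟫_ℝ := by
    have hfc : Continuous fun w => gradient G w :=
      (InnerProductSpace.toDual ℝ F).symm.continuous.comp (hG.continuous_fderiv one_ne_zero)
    exact (hfc.comp hγcont).inner continuous_const
  have key : ∫ t in (0:ℝ)..1, ⟪gradient G (γ t), u - v⟫_ℝ = G u - G v := by
    have := intervalIntegral.integral_eq_sub_of_hasDerivAt (a := (0:ℝ)) (b := 1)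
      (f := fun s => G (γ s)) (fun t _ => hφd t) (hcont.intervalIntegrable 0 1)
    simpa [hγdef] using this
  have hb : ∀ᵐ t ∂(MeasureTheory.volume.restrict (Set.uIoc (0:ℝ) 1)),
      ‖⟪gradient G (γ t), u - v⟫_ℝ‖ ≤ (c₁ * ((1 - t) * ‖v‖ + t * ‖u‖) + c₂) * ‖u - v‖ := by
    refine (ae_restrict_iff' measurableSet_uIoc).2 (Filter.Eventually.of_forall fun t ht => ?_)
    rw [Set.uIoc_of_le zero_le_one] at ht
    have ht0 : (0:ℝ) ≤ t := le_of_lt ht.1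
    have ht1 : t ≤ 1 := ht.2
    have hγt : ‖γ t‖ ≤ (1 - t) * ‖v‖ + t * ‖u‖ := by
      have h2 : γ t = (1 - t) • v + t • u := by
        simp [hγdef, smul_sub, sub_smul, one_smul]; abel
      rw [h2]
      refine (norm_add_le _ _).trans ?_
      rw [norm_smul, norm_smul, Real.norm_eq_abs, Real.norm_eq_abs,
        abs_of_nonneg ht0, abs_of_nonneg (by linarith : (0:ℝ) ≤ 1 - t)]
    calc ‖⟪gradient G (γ t), u - v⟫_ℝ‖ ≤ ‖gradient G (γ t)‖ * ‖u - v‖ :=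
          norm_inner_le_norm _ _
      _ ≤ (c₁ * ((1 - t) * ‖v‖ + t * ‖u‖) + c₂) * ‖u - v‖ := by
          refine mul_le_mul_of_nonneg_right ((hgrad _).trans ?_) (norm_nonneg _)
          have := mul_le_mul_of_nonneg_left hγt hc₁
          linarith
  have hgic : IntervalIntegrable
      (fun t => (c₁ * ((1 - t) * ‖v‖ + t * ‖u‖) + c₂) * ‖u - v‖) MeasureTheory.volume 0 1 :=
    (by fun_prop : Continuous fun t : ℝ =>
      (c₁ * ((1 - t) * ‖v‖ + t * ‖u‖) + c₂) * ‖u - v‖).intervalIntegrable 0 1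
  have habs := intervalIntegral.norm_integral_le_abs_of_norm_le hb hgic
  rw [key] at habs
  have hcomp : ∫ t in (0:ℝ)..1, (c₁ * ((1 - t) * ‖v‖ + t * ‖u‖) + c₂) * ‖u - v‖
      = c₁ / 2 * (‖u - v‖ * ‖u‖) + c₁ / 2 * (‖u - v‖ * ‖v‖) + c₂ * ‖u - v‖ := by
    have hrw : ∀ t : ℝ, (c₁ * ((1 - t) * ‖v‖ + t * ‖u‖) + c₂) * ‖u - v‖
        = (c₁ * ‖v‖ + c₂) * ‖u - v‖ + t * ((c₁ * (‖u‖ - ‖v‖)) * ‖u - v‖) := fun t => by ring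
    simp_rw [hrw]
    rw [intervalIntegral.integral_add intervalIntegrable_const
      ((intervalIntegral.intervalIntegrable_id).mul_const _)]
    have e2 : ∫ x in (0:ℝ)..1, x * (c₁ * (‖u‖ - ‖v‖) * ‖u - v‖)
        = (1/2) * (c₁ * (‖u‖ - ‖v‖) * ‖u - v‖) := by
      rw [intervalIntegral.integral_mul_const, integral_id]; norm_num
    rw [e2, intervalIntegral.integral_const]
    simp only [smul_eq_mul]; ring
  rw [hcomp] at habs
  have hnn : 0 ≤ c₁ / 2 * (‖u - v‖ * ‖u‖) + c₁ / 2 * (‖u - v‖ * ‖v‖) + c₂ * ‖u - v‖ := by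
    positivity
  calc |G u - G v| = ‖G u - G v‖ := (Real.norm_eq_abs _).symm
    _ ≤ _ := habs.trans (le_of_eq (abs_of_nonneg hnn))

/-- Wasserstein-type continuity of integrals of a function with a
linearly growing gradient, along any coupling `ξ` of `μ` and `ν`. -/
theorem integral_sub_integral_le_coupling {d : ℕ}
    (μ ν : Measure (EuclideanSpace ℝ (Fin (2 * d))))
    [IsProbabilityMeasure μ] [IsProbabilityMeasure ν]
    (G : EuclideanSpace ℝ (Fin (2 * d)) → ℝ) (c₁ c₂ p q : ℝ)
    (hG : ContDiff ℝ 1 G) (hc₁ : 0 < c₁) (hc₂ : 0 ≤ c₂)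
    (hgrad : ∀ w : EuclideanSpace ℝ (Fin (2 * d)), ‖gradient G w‖ ≤ c₁ * ‖w‖ + c₂)
    (hp : 1 < p) (hq : 1 < q) (hpq : 1 / p + 1 / q = 1)
    (h2μ : Integrable (fun u => ‖u‖ ^ 2) μ) (h2ν : Integrable (fun v => ‖v‖ ^ 2) ν)
    (hqμ : Integrable (fun u => ‖u‖ ^ q) μ) (hqν : Integrable (fun v => ‖v‖ ^ q) ν)
    (ξ : Measure (EuclideanSpace ℝ (Fin (2 * d)) × EuclideanSpace ℝ (Fin (2 * d))))
    [IsProbabilityMeasure ξ]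
    (hξ₁ : ξ.map Prod.fst = μ) (hξ₂ : ξ.map Prod.snd = ν)
    (hξp : Integrable (fun w => ‖w.1 - w.2‖ ^ p) ξ) :
    |(∫ u, G u ∂μ) - ∫ v, G v ∂ν| ≤
      (c₁ * max ((∫ u, ‖u‖ ^ q ∂μ) ^ (1 / q)) ((∫ v, ‖v‖ ^ q ∂ν) ^ (1 / q)) + c₂) *
        (∫ w, ‖w.1 - w.2‖ ^ p ∂ξ) ^ (1 / p) := by
  have hp0 : (0:ℝ) < p := zero_lt_one.trans hp
  have hq0 : (0:ℝ) < q := zero_lt_one.trans hq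
  set P := ENNReal.ofReal p with hPdef
  set Q := ENNReal.ofReal q with hQdef
  have hP0 : P ≠ 0 := by simp [hPdef, ENNReal.ofReal_eq_zero, not_le, hp0]
  have hPt : P ≠ ⊤ := ENNReal.ofReal_ne_top
  have hQ0 : Q ≠ 0 := by simp [hQdef, ENNReal.ofReal_eq_zero, not_le, hq0]
  have hQt : Q ≠ ⊤ := ENNReal.ofReal_ne_top
  have hPQ : (1:ENNReal) / 1 = 1 / Q + 1 / P := by
    rw [hPdef, hQdef, one_div, one_div, one_div, inv_one,
      ← ENNReal.ofReal_inv_of_pos hq0, ← ENNReal.ofReal_inv_of_pos hp0,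
      ← ENNReal.ofReal_add (by positivity) (by positivity), ← ENNReal.ofReal_one]
    congr 1
    rw [← hpq, one_div, one_div]; ring
  have hmq : AEStronglyMeasurable (fun u : EuclideanSpace ℝ (Fin (2 * d)) => ‖u‖ ^ q)
      (ξ.map (Prod.fst : (EuclideanSpace ℝ (Fin (2 * d))) × (EuclideanSpace ℝ (Fin (2 * d))) → EuclideanSpace ℝ (Fin (2 * d)))) :=
    (continuous_norm.rpow_const fun x => Or.inr hq0.le).aestronglyMeasurable
  have hmq' : AEStronglyMeasurable (fun u : EuclideanSpace ℝ (Fin (2 * d)) => ‖u‖ ^ q)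
      (ξ.map (Prod.snd : (EuclideanSpace ℝ (Fin (2 * d))) × (EuclideanSpace ℝ (Fin (2 * d))) → EuclideanSpace ℝ (Fin (2 * d)))) :=
    (continuous_norm.rpow_const fun x => Or.inr hq0.le).aestronglyMeasurable
  -- transferred q-th moments
  have hint_q1 : Integrable (fun w : (EuclideanSpace ℝ (Fin (2 * d))) × (EuclideanSpace ℝ (Fin (2 * d))) => ‖w.1‖ ^ q) ξ := by
    have h := (integrable_map_measure hmq measurable_fst.aemeasurable).mp
      (by rw [hξ₁]; exact hqμ)
    exact h
  have hint_q2 : Integrable (fun w : (EuclideanSpace ℝ (Fin (2 * d))) × (EuclideanSpace ℝ (Fin (2 * d))) => ‖w.2‖ ^ q) ξ := by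
    have h := (integrable_map_measure hmq' measurable_snd.aemeasurable).mp
      (by rw [hξ₂]; exact hqν)
    exact h
  have hIq1 : ∫ w : (EuclideanSpace ℝ (Fin (2 * d))) × (EuclideanSpace ℝ (Fin (2 * d))), ‖w.1‖ ^ q ∂ξ = ∫ u, ‖u‖ ^ q ∂μ := by
    rw [← hξ₁, integral_map measurable_fst.aemeasurable hmq]
  have hIq2 : ∫ w : (EuclideanSpace ℝ (Fin (2 * d))) × (EuclideanSpace ℝ (Fin (2 * d))), ‖w.2‖ ^ q ∂ξ = ∫ v, ‖v‖ ^ q ∂ν := by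
    rw [← hξ₂, integral_map measurable_snd.aemeasurable hmq']
  -- MemLp facts
  have hΔ : MemLp (fun w : (EuclideanSpace ℝ (Fin (2 * d))) × (EuclideanSpace ℝ (Fin (2 * d))) => ‖w.1 - w.2‖) P ξ := by
    have hm : AEStronglyMeasurable (fun w : (EuclideanSpace ℝ (Fin (2 * d))) × (EuclideanSpace ℝ (Fin (2 * d))) => w.1 - w.2) ξ :=
      (continuous_fst.sub continuous_snd).aestronglyMeasurable
    have h2 : MemLp (fun w : (EuclideanSpace ℝ (Fin (2 * d))) × (EuclideanSpace ℝ (Fin (2 * d))) => ‖w.1 - w.2‖ ^ P.toReal) (P / P) ξ := by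
      rw [hPdef, ENNReal.toReal_ofReal hp0.le, ENNReal.div_self hP0 hPt]
      exact memLp_one_iff_integrable.mpr hξp
    exact ((memLp_norm_rpow_iff hm hP0 hPt).mp h2).norm
  have ha : MemLp (fun w : (EuclideanSpace ℝ (Fin (2 * d))) × (EuclideanSpace ℝ (Fin (2 * d))) => ‖w.1‖) Q ξ := by
    have hm : AEStronglyMeasurable (fun w : (EuclideanSpace ℝ (Fin (2 * d))) × (EuclideanSpace ℝ (Fin (2 * d))) => w.1) ξ :=
      continuous_fst.aestronglyMeasurable
    have h2 : MemLp (fun w : (EuclideanSpace ℝ (Fin (2 * d))) × (EuclideanSpace ℝ (Fin (2 * d))) => ‖w.1‖ ^ Q.toReal) (Q / Q) ξ := by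
      rw [hQdef, ENNReal.toReal_ofReal hq0.le, ENNReal.div_self hQ0 hQt]
      exact memLp_one_iff_integrable.mpr hint_q1
    exact ((memLp_norm_rpow_iff hm hQ0 hQt).mp h2).norm
  have hb : MemLp (fun w : (EuclideanSpace ℝ (Fin (2 * d))) × (EuclideanSpace ℝ (Fin (2 * d))) => ‖w.2‖) Q ξ := by
    have hm : AEStronglyMeasurable (fun w : (EuclideanSpace ℝ (Fin (2 * d))) × (EuclideanSpace ℝ (Fin (2 * d))) => w.2) ξ :=
      continuous_snd.aestronglyMeasurable
    have h2 : MemLp (fun w : (EuclideanSpace ℝ (Fin (2 * d))) × (EuclideanSpace ℝ (Fin (2 * d))) => ‖w.2‖ ^ Q.toReal) (Q / Q) ξ := by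
      rw [hQdef, ENNReal.toReal_ofReal hq0.le, ENNReal.div_self hQ0 hQt]
      exact memLp_one_iff_integrable.mpr hint_q2
    exact ((memLp_norm_rpow_iff hm hQ0 hQt).mp h2).norm
  have hone : MemLp (fun _ : (EuclideanSpace ℝ (Fin (2 * d))) × (EuclideanSpace ℝ (Fin (2 * d))) => (1:ℝ)) Q ξ := memLp_const 1
  -- integrability of products
  have haΔ : Integrable (fun w : (EuclideanSpace ℝ (Fin (2 * d))) × (EuclideanSpace ℝ (Fin (2 * d))) => ‖w.1 - w.2‖ * ‖w.1‖) ξ := by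
    have h := memLp_one_iff_integrable.mp (hΔ.smul ha (hpqr := ⟨by simpa only [one_div, inv_one, div_one] using hPQ.symm⟩))
    simpa [smul_eq_mul, mul_comm, Pi.mul_def] using h
  have hbΔ : Integrable (fun w : (EuclideanSpace ℝ (Fin (2 * d))) × (EuclideanSpace ℝ (Fin (2 * d))) => ‖w.1 - w.2‖ * ‖w.2‖) ξ := by
    have h := memLp_one_iff_integrable.mp (hΔ.smul hb (hpqr := ⟨by simpa only [one_div, inv_one, div_one] using hPQ.symm⟩))
    simpa [smul_eq_mul, mul_comm, Pi.mul_def] using h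
  have hΔ1 : Integrable (fun w : (EuclideanSpace ℝ (Fin (2 * d))) × (EuclideanSpace ℝ (Fin (2 * d))) => ‖w.1 - w.2‖) ξ :=
    hΔ.integrable (by rw [hPdef]; exact ENNReal.one_le_ofReal.mpr hp.le)
  -- pointwise bound on |G x|
  have hGb : ∀ x : EuclideanSpace ℝ (Fin (2 * d)), |G x| ≤ |G 0| + (c₁ / 2 * ‖x‖ ^ 2 + c₂ * ‖x‖) := by
    intro x
    have h := mvt_bound G c₁ c₂ hc₁.le hc₂ hG hgrad x 0
    simp only [sub_zero, norm_zero, mul_zero, add_zero] at h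
    have hx : G x = G 0 + (G x - G 0) := by ring
    calc |G x| = |G 0 + (G x - G 0)| := by rw [← hx]
      _ ≤ |G 0| + |G x - G 0| := abs_add_le _ _
      _ ≤ |G 0| + (c₁ / 2 * ‖x‖ ^ 2 + c₂ * ‖x‖) := by nlinarith [sq_nonneg ‖x‖]
  -- Integrability of G under μ and ν
  have hnorm : ∀ (m : Measure (EuclideanSpace ℝ (Fin (2 * d)))) [IsProbabilityMeasure m],
      Integrable (fun u : EuclideanSpace ℝ (Fin (2 * d)) => ‖u‖ ^ 2) m → Integrable (fun u : EuclideanSpace ℝ (Fin (2 * d)) => ‖u‖) m := by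
    intro m _ h2
    have hg : Integrable (fun x : EuclideanSpace ℝ (Fin (2 * d)) => 1 + ‖x‖ ^ 2) m :=
      (integrable_const (1:ℝ)).add h2
    refine Integrable.mono' hg
      continuous_norm.aestronglyMeasurable (Filter.Eventually.of_forall fun x => ?_)
    simp only [Real.norm_eq_abs, abs_norm]
    nlinarith [norm_nonneg x, sq_nonneg (‖x‖ - 1)]
  have hGint : ∀ (m : Measure (EuclideanSpace ℝ (Fin (2 * d)))) [IsProbabilityMeasure m],
      Integrable (fun u : EuclideanSpace ℝ (Fin (2 * d)) => ‖u‖ ^ 2) m → Integrable G m := by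
    intro m _ h2
    have hg : Integrable (fun x : EuclideanSpace ℝ (Fin (2 * d)) =>
        |G 0| + (c₁ / 2 * ‖x‖ ^ 2 + c₂ * ‖x‖)) m :=
      (integrable_const |G 0|).add ((h2.const_mul (c₁ / 2)).add ((hnorm m h2).const_mul c₂))
    refine Integrable.mono' hg
      hG.continuous.aestronglyMeasurable (Filter.Eventually.of_forall fun x => ?_)
    simpa [Real.norm_eq_abs] using hGb x
  have hGμ : Integrable G μ := hGint μ h2μ
  have hGν : Integrable G ν := hGint ν h2ν
  have hGfst : Integrable (fun w : (EuclideanSpace ℝ (Fin (2 * d))) × (EuclideanSpace ℝ (Fin (2 * d))) => G w.1) ξ := by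
    have h := (integrable_map_measure hG.continuous.aestronglyMeasurable
      measurable_fst.aemeasurable).mp (by rw [hξ₁]; exact hGμ)
    exact h
  have hGsnd : Integrable (fun w : (EuclideanSpace ℝ (Fin (2 * d))) × (EuclideanSpace ℝ (Fin (2 * d))) => G w.2) ξ := by
    have h := (integrable_map_measure hG.continuous.aestronglyMeasurable
      measurable_snd.aemeasurable).mp (by rw [hξ₂]; exact hGν)
    exact h
  have i1 : Integrable (fun w : (EuclideanSpace ℝ (Fin (2 * d))) × (EuclideanSpace ℝ (Fin (2 * d))) => c₁ / 2 * (‖w.1 - w.2‖ * ‖w.1‖)) ξ := haΔ.const_mul _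
  have i2 : Integrable (fun w : (EuclideanSpace ℝ (Fin (2 * d))) × (EuclideanSpace ℝ (Fin (2 * d))) => c₁ / 2 * (‖w.1 - w.2‖ * ‖w.2‖)) ξ := hbΔ.const_mul _
  have i3 : Integrable (fun w : (EuclideanSpace ℝ (Fin (2 * d))) × (EuclideanSpace ℝ (Fin (2 * d))) => c₂ * ‖w.1 - w.2‖) ξ := hΔ1.const_mul _
  have i12 : Integrable (fun w : (EuclideanSpace ℝ (Fin (2 * d))) × (EuclideanSpace ℝ (Fin (2 * d))) =>
      c₁ / 2 * (‖w.1 - w.2‖ * ‖w.1‖) + c₁ / 2 * (‖w.1 - w.2‖ * ‖w.2‖)) ξ := i1.add i2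
  have i123 : Integrable (fun w : (EuclideanSpace ℝ (Fin (2 * d))) × (EuclideanSpace ℝ (Fin (2 * d))) =>
      c₁ / 2 * (‖w.1 - w.2‖ * ‖w.1‖) + c₁ / 2 * (‖w.1 - w.2‖ * ‖w.2‖) + c₂ * ‖w.1 - w.2‖) ξ :=
    i12.add i3
  have heq : (∫ u, G u ∂μ) - ∫ v, G v ∂ν = ∫ w : (EuclideanSpace ℝ (Fin (2 * d))) × (EuclideanSpace ℝ (Fin (2 * d))), (G w.1 - G w.2) ∂ξ := by
    have e1 : ∫ u, G u ∂μ = ∫ w : (EuclideanSpace ℝ (Fin (2 * d))) × (EuclideanSpace ℝ (Fin (2 * d))), G w.1 ∂ξ := by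
      rw [← hξ₁, integral_map measurable_fst.aemeasurable hG.continuous.aestronglyMeasurable]
    have e2 : ∫ v, G v ∂ν = ∫ w : (EuclideanSpace ℝ (Fin (2 * d))) × (EuclideanSpace ℝ (Fin (2 * d))), G w.2 ∂ξ := by
      rw [← hξ₂, integral_map measurable_snd.aemeasurable hG.continuous.aestronglyMeasurable]
    rw [e1, e2, ← integral_sub hGfst hGsnd]
  -- main estimate
  have hmain : |∫ w : (EuclideanSpace ℝ (Fin (2 * d))) × (EuclideanSpace ℝ (Fin (2 * d))), (G w.1 - G w.2) ∂ξ| ≤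
      ∫ w : (EuclideanSpace ℝ (Fin (2 * d))) × (EuclideanSpace ℝ (Fin (2 * d))), (c₁ / 2 * (‖w.1 - w.2‖ * ‖w.1‖) + c₁ / 2 * (‖w.1 - w.2‖ * ‖w.2‖)
        + c₂ * ‖w.1 - w.2‖) ∂ξ := by
    rw [← Real.norm_eq_abs]
    refine norm_integral_le_of_norm_le i123
      (Filter.Eventually.of_forall fun w => ?_)
    rw [Real.norm_eq_abs]
    exact mvt_bound G c₁ c₂ hc₁.le hc₂ hG hgrad w.1 w.2
  have hsplit : ∫ w : (EuclideanSpace ℝ (Fin (2 * d))) × (EuclideanSpace ℝ (Fin (2 * d))), (c₁ / 2 * (‖w.1 - w.2‖ * ‖w.1‖) + c₁ / 2 * (‖w.1 - w.2‖ * ‖w.2‖)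
        + c₂ * ‖w.1 - w.2‖) ∂ξ
      = c₁ / 2 * ∫ w : (EuclideanSpace ℝ (Fin (2 * d))) × (EuclideanSpace ℝ (Fin (2 * d))), ‖w.1 - w.2‖ * ‖w.1‖ ∂ξ
        + c₁ / 2 * ∫ w : (EuclideanSpace ℝ (Fin (2 * d))) × (EuclideanSpace ℝ (Fin (2 * d))), ‖w.1 - w.2‖ * ‖w.2‖ ∂ξ
        + c₂ * ∫ w : (EuclideanSpace ℝ (Fin (2 * d))) × (EuclideanSpace ℝ (Fin (2 * d))), ‖w.1 - w.2‖ ∂ξ := by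
    rw [integral_add i12 i3, integral_add i1 i2,
      integral_const_mul, integral_const_mul, integral_const_mul]
  have conj : Real.HolderConjugate p q := Real.holderConjugate_iff.mpr ⟨hp, by simpa only [one_div] using hpq⟩
  set W : ℝ := (∫ w : (EuclideanSpace ℝ (Fin (2 * d))) × (EuclideanSpace ℝ (Fin (2 * d))), ‖w.1 - w.2‖ ^ p ∂ξ) ^ (1 / p) with hWdef
  have hW0 : 0 ≤ W :=
    Real.rpow_nonneg (integral_nonneg fun w => Real.rpow_nonneg (norm_nonneg _) _) _
  set σ : ℝ := max ((∫ u, ‖u‖ ^ q ∂μ) ^ (1 / q)) ((∫ v, ‖v‖ ^ q ∂ν) ^ (1 / q)) with hσdef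
  have hnn : (0 : (EuclideanSpace ℝ (Fin (2 * d))) × (EuclideanSpace ℝ (Fin (2 * d))) → ℝ) ≤ᵐ[ξ] fun w => ‖w.1 - w.2‖ :=
    Filter.Eventually.of_forall fun w => by simp
  have hnn1 : (0 : (EuclideanSpace ℝ (Fin (2 * d))) × (EuclideanSpace ℝ (Fin (2 * d))) → ℝ) ≤ᵐ[ξ] fun w => ‖w.1‖ :=
    Filter.Eventually.of_forall fun w => by simp
  have hnn2 : (0 : (EuclideanSpace ℝ (Fin (2 * d))) × (EuclideanSpace ℝ (Fin (2 * d))) → ℝ) ≤ᵐ[ξ] fun w => ‖w.2‖ :=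
    Filter.Eventually.of_forall fun w => by simp
  have hnnone : (0 : (EuclideanSpace ℝ (Fin (2 * d))) × (EuclideanSpace ℝ (Fin (2 * d))) → ℝ) ≤ᵐ[ξ] fun _ => (1:ℝ) :=
    Filter.Eventually.of_forall fun w => by simp
  have H1 : ∫ w : (EuclideanSpace ℝ (Fin (2 * d))) × (EuclideanSpace ℝ (Fin (2 * d))), ‖w.1 - w.2‖ * ‖w.1‖ ∂ξ ≤ W * σ := by
    have h := integral_mul_le_Lp_mul_Lq_of_nonneg conj hnn hnn1 hΔ ha
    refine h.trans ?_
    rw [← hWdef] at *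
    refine mul_le_mul_of_nonneg_left ?_ hW0
    rw [hIq1]
    exact le_max_left _ _
  have H2 : ∫ w : (EuclideanSpace ℝ (Fin (2 * d))) × (EuclideanSpace ℝ (Fin (2 * d))), ‖w.1 - w.2‖ * ‖w.2‖ ∂ξ ≤ W * σ := by
    have h := integral_mul_le_Lp_mul_Lq_of_nonneg conj hnn hnn2 hΔ hb
    refine h.trans ?_
    refine mul_le_mul_of_nonneg_left ?_ hW0
    rw [hIq2]
    exact le_max_right _ _
  have H3 : ∫ w : (EuclideanSpace ℝ (Fin (2 * d))) × (EuclideanSpace ℝ (Fin (2 * d))), ‖w.1 - w.2‖ ∂ξ ≤ W := by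
    have h := integral_mul_le_Lp_mul_Lq_of_nonneg conj hnn hnnone hΔ hone
    rw [hWdef, one_div]
    simpa [Real.one_rpow, measure_univ] using h
  rw [heq]
  calc |∫ w : (EuclideanSpace ℝ (Fin (2 * d))) × (EuclideanSpace ℝ (Fin (2 * d))), (G w.1 - G w.2) ∂ξ| ≤ _ := hmain
    _ = c₁ / 2 * ∫ w : (EuclideanSpace ℝ (Fin (2 * d))) × (EuclideanSpace ℝ (Fin (2 * d))), ‖w.1 - w.2‖ * ‖w.1‖ ∂ξ
        + c₁ / 2 * ∫ w : (EuclideanSpace ℝ (Fin (2 * d))) × (EuclideanSpace ℝ (Fin (2 * d))), ‖w.1 - w.2‖ * ‖w.2‖ ∂ξ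
        + c₂ * ∫ w : (EuclideanSpace ℝ (Fin (2 * d))) × (EuclideanSpace ℝ (Fin (2 * d))), ‖w.1 - w.2‖ ∂ξ := hsplit
    _ ≤ c₁ / 2 * (W * σ) + c₁ / 2 * (W * σ) + c₂ * W := by
        refine add_le_add (add_le_add ?_ ?_) ?_
        · exact mul_le_mul_of_nonneg_left H1 (by positivity)
        · exact mul_le_mul_of_nonneg_left H2 (by positivity)
        · exact mul_le_mul_of_nonneg_left H3 hc₂
    _ = (c₁ * σ + c₂) * W := by ring
end

section
/- Let F : ℝ^d → ℝ be continuously differentiable and let m > 0, b ≥ 0, M > 0, B ≥ 0, A₀ ≥ 0, γ > 0, β > 0. Suppose that for all x ∈ ℝ^d one has ⟨x, ∇F(x)⟩ ≥ m‖x‖² − b and F(x) ≤ (M/2)‖x‖² + B‖x‖ + A₀. Then for every λ_c with 0 < λ_c ≤ min{1/4, m/(M + 2B + γ²/2)} and every A_c ≥ (β/2)(b + 2B + A₀), one has for all x ∈ ℝ^d: ⟨x, ∇F(x)⟩ ≥ 2λ_c·(F(x) + γ²‖x‖²/4) − 2A_c/β. -/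
open scoped InnerProductSpace

/-- The dissipativity condition together with the quadratic upper bound
implies the drift condition `⟨x, ∇F(x)⟩ ≥ 2λ_c(F(x) + γ²‖x‖²/4) − 2A_c/β`. -/
theorem drift_condition {d : ℕ} (F : EuclideanSpace ℝ (Fin d) → ℝ)
    (m b M B A₀ γ β : ℝ)
    (hF : ContDiff ℝ 1 F) (hm : 0 < m) (hb : 0 ≤ b) (hM : 0 < M) (hB : 0 ≤ B)
    (hA₀ : 0 ≤ A₀) (hγ : 0 < γ) (hβ : 0 < β)
    (hdis : ∀ x : EuclideanSpace ℝ (Fin d), ⟪x, gradient F x⟫_ℝ ≥ m * ‖x‖ ^ 2 - b)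
    (hupper : ∀ x : EuclideanSpace ℝ (Fin d),
      F x ≤ M / 2 * ‖x‖ ^ 2 + B * ‖x‖ + A₀) :
    ∀ lc Ac : ℝ, 0 < lc → lc ≤ min (1 / 4) (m / (M + 2 * B + γ ^ 2 / 2)) →
      β / 2 * (b + 2 * B + A₀) ≤ Ac →
      ∀ x : EuclideanSpace ℝ (Fin d),
        ⟪x, gradient F x⟫_ℝ ≥ 2 * lc * (F x + γ ^ 2 * ‖x‖ ^ 2 / 4) - 2 * Ac / β 
    := by
  intro lc Ac hlc hle hAc x
  have h1 := hdis x
  have h2 := hupper x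
  have hle1 : lc ≤ 1 / 4 := le_trans hle (min_le_left _ _)
  have hle2 : lc ≤ m / (M + 2 * B + γ ^ 2 / 2) := le_trans hle (min_le_right _ _)
  have hden : 0 < M + 2 * B + γ ^ 2 / 2 := by positivity
  have hle3 : lc * (M + 2 * B + γ ^ 2 / 2) ≤ m := by
    rw [← le_div_iff₀ hden]; exact hle2
  have hAc2 : b + 2 * B + A₀ ≤ 2 * Ac / β := by
    rw [le_div_iff₀ hβ]; nlinarith
  have hn : (0:ℝ) ≤ ‖x‖ := norm_nonneg x
  have hsq : (0:ℝ) ≤ (‖x‖ - 1) ^ 2 := sq_nonneg _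
  nlinarith [sq_nonneg (‖x‖ : ℝ), mul_nonneg hlc.le hn, mul_nonneg hlc.le (sq_nonneg (‖x‖ - 1))]
end

section
/- Let γ > 0, α_c > 0, ε_c > 0, let 𝒱 : ℝ^d × ℝ^d → [0,∞) be measurable, and let h : [0,∞) → [0,∞) be a function with h(t) ≤ t for all t ≥ 0. Define r((x₁,v₁),(x₂,v₂)) = α_c‖x₁ − x₂‖ + ‖x₁ − x₂ + γ⁻¹(v₁ − v₂)‖ and ρ((x₁,v₁),(x₂,v₂)) = h(r((x₁,v₁),(x₂,v₂)))·(1 + ε_c·𝒱(x₁,v₁) + ε_c·𝒱(x₂,v₂)). Let μ, ν be probability measures on ℝ^d × ℝ^d with ∫𝒱² dμ < ∞ and ∫𝒱² dν < ∞, and let ξ be any coupling of μ and ν. Then ∫ ρ((x₁,v₁),(x₂,v₂)) dξ ≤ c₁₇·(1 + ε_c·(∫𝒱² dμ)^{1/2} + ε_c·(∫𝒱² dν)^{1/2})·(∫‖(x₁,v₁) − (x₂,v₂)‖² dξ)^{1/2}, where c₁₇ = 3·max{1 + α_c, γ⁻¹}. -/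
open MeasureTheory
open scoped InnerProductSpace ENNReal

/-- bound of the semimetric `ρ`-cost of any coupling `ξ` of `μ` and `ν`
by the quadratic cost, where
`ρ = h(r)·(1 + ε_c 𝒱(x₁,v₁) + ε_c 𝒱(x₂,v₂))`,
`r((x₁,v₁),(x₂,v₂)) = α_c‖x₁ − x₂‖ + ‖x₁ − x₂ + γ⁻¹(v₁ − v₂)‖`, and
`c₁₇ = 3·max{1 + α_c, γ⁻¹}`. -/
theorem rho_cost_le_quadratic_cost {d : ℕ} (γ αc εc : ℝ)
    (hγ : 0 < γ) (hαc : 0 < αc) (hεc : 0 < εc)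
    (V : EuclideanSpace ℝ (Fin d) × EuclideanSpace ℝ (Fin d) → ℝ)
    (hVmeas : Measurable V) (hVnn : ∀ w, 0 ≤ V w)
    (h : ℝ → ℝ) (hh0 : ∀ t, 0 ≤ t → 0 ≤ h t) (hht : ∀ t, 0 ≤ t → h t ≤ t)
    (μ ν : Measure (EuclideanSpace ℝ (Fin d) × EuclideanSpace ℝ (Fin d)))
    [IsProbabilityMeasure μ] [IsProbabilityMeasure ν]
    (hV2μ : Integrable (fun w => V w ^ 2) μ) (hV2ν : Integrable (fun w => V w ^ 2) ν)
    (ξ : Measure ((EuclideanSpace ℝ (Fin d) × EuclideanSpace ℝ (Fin d)) ×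
      (EuclideanSpace ℝ (Fin d) × EuclideanSpace ℝ (Fin d))))
    [IsProbabilityMeasure ξ]
    (hξ₁ : ξ.map Prod.fst = μ) (hξ₂ : ξ.map Prod.snd = ν) :
    (∫⁻ w, ENNReal.ofReal
        (h (αc * ‖w.1.1 - w.2.1‖ + ‖w.1.1 - w.2.1 + γ⁻¹ • (w.1.2 - w.2.2)‖) *
          (1 + εc * V w.1 + εc * V w.2)) ∂ξ) ≤
      ENNReal.ofReal (3 * max (1 + αc) γ⁻¹ *
          (1 + εc * (∫ w, V w ^ 2 ∂μ) ^ ((1 : ℝ) / 2) +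
            εc * (∫ w, V w ^ 2 ∂ν) ^ ((1 : ℝ) / 2))) *
        (∫⁻ w, ENNReal.ofReal (‖w.1.1 - w.2.1‖ ^ 2 + ‖w.1.2 - w.2.2‖ ^ 2) ∂ξ) ^
          ((1 : ℝ) / 2) := by
  classical
  set M : ℝ := max (1 + αc) γ⁻¹ with hMdef
  have hM0 : 0 < M := lt_of_lt_of_le (by positivity) (le_max_left _ _)
  have habs : ∀ a b : ℝ, 0 ≤ a → 0 ≤ b →
      a + b ≤ Real.sqrt 2 * Real.sqrt (a ^ 2 + b ^ 2) := by
    intro a b ha hb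
    rw [← Real.sqrt_mul (by norm_num : (0:ℝ) ≤ 2)]
    calc a + b = Real.sqrt ((a + b) ^ 2) := (Real.sqrt_sq (by positivity)).symm
      _ ≤ Real.sqrt (2 * (a ^ 2 + b ^ 2)) :=
        Real.sqrt_le_sqrt (by nlinarith [sq_nonneg (a - b)])
  set A : (EuclideanSpace ℝ (Fin d) × EuclideanSpace ℝ (Fin d)) × (EuclideanSpace ℝ (Fin d) × EuclideanSpace ℝ (Fin d)) → ℝ≥0∞ :=
    fun w => ENNReal.ofReal (Real.sqrt (‖w.1.1 - w.2.1‖ ^ 2 + ‖w.1.2 - w.2.2‖ ^ 2)) with hAdef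
  set B : (EuclideanSpace ℝ (Fin d) × EuclideanSpace ℝ (Fin d)) × (EuclideanSpace ℝ (Fin d) × EuclideanSpace ℝ (Fin d)) → ℝ≥0∞ :=
    fun w => ENNReal.ofReal (1 + εc * V w.1 + εc * V w.2) with hBdef
  have hAmeas : Measurable A := by
    apply ENNReal.measurable_ofReal.comp
    apply Measurable.sqrt
    exact (((measurable_fst.comp measurable_fst).sub
        (measurable_fst.comp measurable_snd)).norm.pow_const 2).add
      (((measurable_snd.comp measurable_fst).sub
        (measurable_snd.comp measurable_snd)).norm.pow_const 2)
  have hBmeas : Measurable B := by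
    apply ENNReal.measurable_ofReal.comp
    exact (measurable_const.add ((hVmeas.comp measurable_fst).const_mul εc)).add
      ((hVmeas.comp measurable_snd).const_mul εc)
  have key : ∀ w : (EuclideanSpace ℝ (Fin d) × EuclideanSpace ℝ (Fin d)) × (EuclideanSpace ℝ (Fin d) × EuclideanSpace ℝ (Fin d)), ENNReal.ofReal
      (h (αc * ‖w.1.1 - w.2.1‖ + ‖w.1.1 - w.2.1 + γ⁻¹ • (w.1.2 - w.2.2)‖) *
        (1 + εc * V w.1 + εc * V w.2)) ≤
      ENNReal.ofReal (Real.sqrt 2 * M) * (A w * B w) := by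
    intro w
    have hg0 : 0 ≤ 1 + εc * V w.1 + εc * V w.2 := by
      have := hVnn w.1; have := hVnn w.2; positivity
    have hr0 : 0 ≤ αc * ‖w.1.1 - w.2.1‖ + ‖w.1.1 - w.2.1 + γ⁻¹ • (w.1.2 - w.2.2)‖ := by
      positivity
    have hsmul : ‖γ⁻¹ • (w.1.2 - w.2.2)‖ = γ⁻¹ * ‖w.1.2 - w.2.2‖ := by
      rw [norm_smul, Real.norm_eq_abs, abs_of_pos (by positivity)]
    have hrle : αc * ‖w.1.1 - w.2.1‖ + ‖w.1.1 - w.2.1 + γ⁻¹ • (w.1.2 - w.2.2)‖ ≤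
        Real.sqrt 2 * M * Real.sqrt (‖w.1.1 - w.2.1‖ ^ 2 + ‖w.1.2 - w.2.2‖ ^ 2) := by
      have h1 : ‖w.1.1 - w.2.1 + γ⁻¹ • (w.1.2 - w.2.2)‖ ≤
          ‖w.1.1 - w.2.1‖ + γ⁻¹ * ‖w.1.2 - w.2.2‖ := by
        calc ‖w.1.1 - w.2.1 + γ⁻¹ • (w.1.2 - w.2.2)‖ ≤
            ‖w.1.1 - w.2.1‖ + ‖γ⁻¹ • (w.1.2 - w.2.2)‖ := norm_add_le _ _
          _ = _ := by rw [hsmul]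
      have h2 : αc * ‖w.1.1 - w.2.1‖ + (‖w.1.1 - w.2.1‖ + γ⁻¹ * ‖w.1.2 - w.2.2‖) ≤
          M * (‖w.1.1 - w.2.1‖ + ‖w.1.2 - w.2.2‖) := by
        have hm1 : 1 + αc ≤ M := le_max_left _ _
        have hm2 : γ⁻¹ ≤ M := le_max_right _ _
        have hn1 : (0:ℝ) ≤ ‖w.1.1 - w.2.1‖ := norm_nonneg _
        have hn2 : (0:ℝ) ≤ ‖w.1.2 - w.2.2‖ := norm_nonneg _
        nlinarith
      have h3 := habs ‖w.1.1 - w.2.1‖ ‖w.1.2 - w.2.2‖ (norm_nonneg _) (norm_nonneg _)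
      calc αc * ‖w.1.1 - w.2.1‖ + ‖w.1.1 - w.2.1 + γ⁻¹ • (w.1.2 - w.2.2)‖ ≤
          M * (‖w.1.1 - w.2.1‖ + ‖w.1.2 - w.2.2‖) := by linarith
        _ ≤ M * (Real.sqrt 2 * Real.sqrt (‖w.1.1 - w.2.1‖ ^ 2 + ‖w.1.2 - w.2.2‖ ^ 2)) :=
          mul_le_mul_of_nonneg_left h3 hM0.le
        _ = _ := by ring
    have hhle : h (αc * ‖w.1.1 - w.2.1‖ + ‖w.1.1 - w.2.1 + γ⁻¹ • (w.1.2 - w.2.2)‖) ≤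
        Real.sqrt 2 * M * Real.sqrt (‖w.1.1 - w.2.1‖ ^ 2 + ‖w.1.2 - w.2.2‖ ^ 2) :=
      le_trans (hht _ hr0) hrle
    calc ENNReal.ofReal (h (αc * ‖w.1.1 - w.2.1‖ + ‖w.1.1 - w.2.1 + γ⁻¹ • (w.1.2 - w.2.2)‖) *
          (1 + εc * V w.1 + εc * V w.2)) ≤
        ENNReal.ofReal ((Real.sqrt 2 * M * Real.sqrt (‖w.1.1 - w.2.1‖ ^ 2 + ‖w.1.2 - w.2.2‖ ^ 2)) *
          (1 + εc * V w.1 + εc * V w.2)) :=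
        ENNReal.ofReal_le_ofReal (mul_le_mul_of_nonneg_right hhle hg0)
      _ = ENNReal.ofReal (Real.sqrt 2 * M) * (A w * B w) := by
        rw [hAdef, hBdef]
        rw [← ENNReal.ofReal_mul (Real.sqrt_nonneg _), ← ENNReal.ofReal_mul (by positivity),
          mul_assoc]
  have step1 : (∫⁻ w, ENNReal.ofReal
      (h (αc * ‖w.1.1 - w.2.1‖ + ‖w.1.1 - w.2.1 + γ⁻¹ • (w.1.2 - w.2.2)‖) *
        (1 + εc * V w.1 + εc * V w.2)) ∂ξ) ≤
      ENNReal.ofReal (Real.sqrt 2 * M) * ∫⁻ w, A w * B w ∂ξ := by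
    rw [← lintegral_const_mul' _ _ ENNReal.ofReal_ne_top]
    exact lintegral_mono key
  have hconj : Real.HolderConjugate 2 2 := by constructor <;> norm_num
  have holder : (∫⁻ w, A w * B w ∂ξ) ≤
      (∫⁻ w, A w ^ (2:ℝ) ∂ξ) ^ ((1:ℝ)/2) * (∫⁻ w, B w ^ (2:ℝ) ∂ξ) ^ ((1:ℝ)/2) := by
    simpa [Pi.mul_apply] using
      ENNReal.lintegral_mul_le_Lp_mul_Lq ξ hconj hAmeas.aemeasurable hBmeas.aemeasurable
  have hA2 : (∫⁻ w, A w ^ (2:ℝ) ∂ξ) =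
      ∫⁻ w, ENNReal.ofReal (‖w.1.1 - w.2.1‖ ^ 2 + ‖w.1.2 - w.2.2‖ ^ 2) ∂ξ := by
    apply lintegral_congr; intro w
    rw [hAdef]
    simp only []
    rw [ENNReal.ofReal_rpow_of_nonneg (Real.sqrt_nonneg _) (by norm_num)]
    congr 1
    rw [show ((2:ℝ)) = ((2:ℕ):ℝ) by norm_num, Real.rpow_natCast]
    exact Real.sq_sqrt (by positivity)
  have hptw : ∀ x : ℝ, 0 ≤ x → ENNReal.ofReal (εc * x) ^ (2:ℝ) =
      ENNReal.ofReal (εc ^ 2 * x ^ 2) := by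
    intro x hx
    rw [ENNReal.ofReal_rpow_of_nonneg (by positivity) (by norm_num)]
    congr 1
    rw [show ((2:ℝ)) = ((2:ℕ):ℝ) by norm_num, Real.rpow_natCast]
    ring
  have hmom : ∀ (κ : Measure (EuclideanSpace ℝ (Fin d) × EuclideanSpace ℝ (Fin d))) [IsProbabilityMeasure κ],
      Integrable (fun w => V w ^ 2) κ →
      (∫⁻ w, ENNReal.ofReal (εc ^ 2 * V w ^ 2) ∂κ) ^ ((1:ℝ)/2) =
        ENNReal.ofReal (εc * (∫ w, V w ^ 2 ∂κ) ^ ((1:ℝ)/2)) := by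
    intro κ _ hint
    have hInn : 0 ≤ ∫ w, V w ^ 2 ∂κ := integral_nonneg fun w => sq_nonneg _
    rw [lintegral_congr (fun w => ENNReal.ofReal_mul (by positivity)),
      lintegral_const_mul' _ _ ENNReal.ofReal_ne_top,
      ← MeasureTheory.ofReal_integral_eq_lintegral_ofReal hint
        (Filter.Eventually.of_forall fun w => sq_nonneg _),
      ← ENNReal.ofReal_mul (by positivity),
      ENNReal.ofReal_rpow_of_nonneg (by positivity) (by norm_num)]
    congr 1
    rw [← Real.sqrt_eq_rpow, ← Real.sqrt_eq_rpow,
      Real.sqrt_mul (by positivity), Real.sqrt_sq hεc.le]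
  have hB1meas : Measurable fun w : (EuclideanSpace ℝ (Fin d) × EuclideanSpace ℝ (Fin d)) × (EuclideanSpace ℝ (Fin d) × EuclideanSpace ℝ (Fin d)) => ENNReal.ofReal (εc * V w.1) :=
    ENNReal.measurable_ofReal.comp ((hVmeas.comp measurable_fst).const_mul εc)
  have hB2meas : Measurable fun w : (EuclideanSpace ℝ (Fin d) × EuclideanSpace ℝ (Fin d)) × (EuclideanSpace ℝ (Fin d) × EuclideanSpace ℝ (Fin d)) => ENNReal.ofReal (εc * V w.2) :=
    ENNReal.measurable_ofReal.comp ((hVmeas.comp measurable_snd).const_mul εc)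
  have mink1 := ENNReal.lintegral_Lp_add_le (μ := ξ)
    (f := fun w => (1:ℝ≥0∞) + ENNReal.ofReal (εc * V w.1))
    (g := fun w => ENNReal.ofReal (εc * V w.2))
    (measurable_const.add hB1meas).aemeasurable hB2meas.aemeasurable
    (p := 2) (by norm_num)
  have mink2 := ENNReal.lintegral_Lp_add_le (μ := ξ)
    (f := fun _ => (1:ℝ≥0∞)) (g := fun w => ENNReal.ofReal (εc * V w.1))
    measurable_const.aemeasurable hB1meas.aemeasurable (p := 2) (by norm_num)
  simp only [Pi.add_apply] at mink1 mink2
  have hone : (∫⁻ _ : (EuclideanSpace ℝ (Fin d) × EuclideanSpace ℝ (Fin d)) × (EuclideanSpace ℝ (Fin d) × EuclideanSpace ℝ (Fin d)), (1:ℝ≥0∞) ^ (2:ℝ) ∂ξ) ^ ((1:ℝ)/2) = 1 := by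
    simp
  have hμterm : (∫⁻ w, ENNReal.ofReal (εc * V w.1) ^ (2:ℝ) ∂ξ) ^ ((1:ℝ)/2) =
      ENNReal.ofReal (εc * (∫ w, V w ^ 2 ∂μ) ^ ((1:ℝ)/2)) := by
    have e1 : (∫⁻ w, ENNReal.ofReal (εc * V w.1) ^ (2:ℝ) ∂ξ) =
        ∫⁻ w, ENNReal.ofReal (εc ^ 2 * V w.1 ^ 2) ∂ξ :=
      lintegral_congr fun w => hptw _ (hVnn _)
    have e2 : (∫⁻ w, ENNReal.ofReal (εc ^ 2 * V w.1 ^ 2) ∂ξ) =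
        ∫⁻ w, ENNReal.ofReal (εc ^ 2 * V w ^ 2) ∂μ := by
      rw [← hξ₁, lintegral_map
        (Measurable.ennreal_ofReal ((hVmeas.pow_const 2).const_mul _)) measurable_fst]
    rw [e1, e2, hmom μ hV2μ]
  have hνterm : (∫⁻ w, ENNReal.ofReal (εc * V w.2) ^ (2:ℝ) ∂ξ) ^ ((1:ℝ)/2) =
      ENNReal.ofReal (εc * (∫ w, V w ^ 2 ∂ν) ^ ((1:ℝ)/2)) := by
    have e1 : (∫⁻ w, ENNReal.ofReal (εc * V w.2) ^ (2:ℝ) ∂ξ) =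
        ∫⁻ w, ENNReal.ofReal (εc ^ 2 * V w.2 ^ 2) ∂ξ :=
      lintegral_congr fun w => hptw _ (hVnn _)
    have e2 : (∫⁻ w, ENNReal.ofReal (εc ^ 2 * V w.2 ^ 2) ∂ξ) =
        ∫⁻ w, ENNReal.ofReal (εc ^ 2 * V w ^ 2) ∂ν := by
      rw [← hξ₂, lintegral_map
        (Measurable.ennreal_ofReal ((hVmeas.pow_const 2).const_mul _)) measurable_snd]
    rw [e1, e2, hmom ν hV2ν]
  set Iμ : ℝ := (∫ w, V w ^ 2 ∂μ) ^ ((1:ℝ)/2) with hIμ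
  set Iν : ℝ := (∫ w, V w ^ 2 ∂ν) ^ ((1:ℝ)/2) with hIν
  have hIμ0 : 0 ≤ Iμ := Real.rpow_nonneg (integral_nonneg fun w => sq_nonneg _) _
  have hIν0 : 0 ≤ Iν := Real.rpow_nonneg (integral_nonneg fun w => sq_nonneg _) _
  have hBsum : ∀ w, B w = ((1:ℝ≥0∞) + ENNReal.ofReal (εc * V w.1)) +
      ENNReal.ofReal (εc * V w.2) := by
    intro w
    rw [hBdef]
    simp only []
    rw [ENNReal.ofReal_add (by have := hVnn w.1; positivity) (by have := hVnn w.2; positivity),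
      ENNReal.ofReal_add (by norm_num) (by have := hVnn w.1; positivity), ENNReal.ofReal_one]
  have hBnorm : (∫⁻ w, B w ^ (2:ℝ) ∂ξ) ^ ((1:ℝ)/2) ≤
      ENNReal.ofReal (1 + εc * Iμ + εc * Iν) := by
    simp only [hBsum]
    refine le_trans mink1 ?_
    rw [hνterm]
    refine le_trans (add_le_add_left (le_trans mink2 (by rw [hone, hμterm])) _) ?_
    rw [ENNReal.ofReal_add (by positivity) (by positivity),
      ENNReal.ofReal_add (by norm_num) (by positivity), ENNReal.ofReal_one]
  have step2 : (∫⁻ w, A w * B w ∂ξ) ≤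
      (∫⁻ w, ENNReal.ofReal (‖w.1.1 - w.2.1‖ ^ 2 + ‖w.1.2 - w.2.2‖ ^ 2) ∂ξ) ^ ((1:ℝ)/2) *
        ENNReal.ofReal (1 + εc * Iμ + εc * Iν) := by
    refine le_trans holder ?_
    rw [hA2]
    exact mul_le_mul_right hBnorm _
  refine le_trans step1 ?_
  refine le_trans (mul_le_mul_right step2 _) ?_
  have hrw : ENNReal.ofReal (Real.sqrt 2 * M) *
      ((∫⁻ w, ENNReal.ofReal (‖w.1.1 - w.2.1‖ ^ 2 + ‖w.1.2 - w.2.2‖ ^ 2) ∂ξ) ^ ((1:ℝ)/2) *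
        ENNReal.ofReal (1 + εc * Iμ + εc * Iν)) =
      (ENNReal.ofReal (Real.sqrt 2 * M) * ENNReal.ofReal (1 + εc * Iμ + εc * Iν)) *
        (∫⁻ w, ENNReal.ofReal (‖w.1.1 - w.2.1‖ ^ 2 + ‖w.1.2 - w.2.2‖ ^ 2) ∂ξ) ^ ((1:ℝ)/2) := by
    ring
  rw [hrw]
  refine mul_le_mul_left ?_ _
  rw [← ENNReal.ofReal_mul (by positivity)]
  apply ENNReal.ofReal_le_ofReal
  have hsqrt2 : Real.sqrt 2 ≤ 3 := by
    rw [show (3:ℝ) = Real.sqrt (3^2) by rw [Real.sqrt_sq]; norm_num]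
    exact Real.sqrt_le_sqrt (by norm_num)
  have hS0 : 0 ≤ 1 + εc * Iμ + εc * Iν := by positivity
  nlinarith [mul_nonneg hM0.le hS0]
end

section
/- Let β > 0, γ > 0, λ_c ∈ (0, 1/4), M > 0, B ≥ 0. Let F : ℝ^d → ℝ be continuously differentiable, nonnegative, and satisfy ‖∇F(x)‖ ≤ M‖x‖ + B for all x. Define the Lyapunov function 𝒱(x,v) = β·F(x) + (β/4)·γ²·(‖x + γ⁻¹v‖² + ‖γ⁻¹v‖² − λ_c‖x‖²) and ℰ(x,v) = (M/2 + γ²/4 − γ²λ_c/4)‖v‖² + (3/2)(M‖x‖ + B)² + (γ/2)⟨∇F(x), v⟩. Then for all (x,v) ∈ ℝ^d × ℝ^d one has ℰ(x,v) ≤ K₁·𝒱(x,v)/β + K₂, where K₁ = max{ 16M²(3 + 2γ)/((1 − 2λ_c)γ²), 8(M/2 + γ²/4 − γ²λ_c/4 + γ)/(1 − 2λ_c) } and K₂ = B²(3 + 2γ). -/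
set_option maxHeartbeats 1000000


open scoped InnerProductSpace

/-- the error term
`ℰ(x,v) = (M/2 + γ²/4 − γ²λ_c/4)‖v‖² + (3/2)(M‖x‖ + B)² + (γ/2)⟨∇F(x), v⟩`
is bounded by `K₁·𝒱(x,v)/β + K₂` where
`𝒱(x,v) = βF(x) + (β/4)γ²(‖x + γ⁻¹v‖² + ‖γ⁻¹v‖² − λ_c‖x‖²)`. -/
theorem error_term_le_lyapunov {d : ℕ} (F : EuclideanSpace ℝ (Fin d) → ℝ)
    (β γ lc M B : ℝ) (hβ : 0 < β) (hγ : 0 < γ) (hlc₀ : 0 < lc) (hlc₁ : lc < 1 / 4)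
    (hM : 0 < M) (hB : 0 ≤ B)
    (hF : ContDiff ℝ 1 F) (hFnn : ∀ x, 0 ≤ F x)
    (hgrad : ∀ x : EuclideanSpace ℝ (Fin d), ‖gradient F x‖ ≤ M * ‖x‖ + B) :
    ∀ x v : EuclideanSpace ℝ (Fin d),
      (M / 2 + γ ^ 2 / 4 - γ ^ 2 * lc / 4) * ‖v‖ ^ 2 +
          3 / 2 * (M * ‖x‖ + B) ^ 2 + γ / 2 * ⟪gradient F x, v⟫_ℝ ≤
        max (16 * M ^ 2 * (3 + 2 * γ) / ((1 - 2 * lc) * γ ^ 2))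
            (8 * (M / 2 + γ ^ 2 / 4 - γ ^ 2 * lc / 4 + γ) / (1 - 2 * lc)) *
          ((β * F x + β / 4 * γ ^ 2 *
            (‖x + γ⁻¹ • v‖ ^ 2 + ‖γ⁻¹ • v‖ ^ 2 - lc * ‖x‖ ^ 2)) / β) +
          B ^ 2 * (3 + 2 * γ) := by
  intro x v
  have hγ0 : γ ≠ 0 := ne_of_gt hγ
  have hlc2 : 0 < 1 - 2 * lc := by linarith
  set a := ‖x‖ with ha_def
  set b := ‖v‖ with hb_def
  have ha : 0 ≤ a := norm_nonneg x
  have hb : 0 ≤ b := norm_nonneg v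
  set P := ‖x + γ⁻¹ • v‖ with hP_def
  have hP : 0 ≤ P := norm_nonneg _
  have hu : ‖γ⁻¹ • v‖ = γ⁻¹ * b := by
    rw [norm_smul, Real.norm_eq_abs, abs_of_pos (inv_pos.mpr hγ)]
  have hq2 : γ ^ 2 * (γ⁻¹ * b) ^ 2 = b ^ 2 := by
    field_simp
  have hxu : a ≤ P + γ⁻¹ * b := by
    rw [← hu]
    calc a = ‖(x + γ⁻¹ • v) - γ⁻¹ • v‖ := by rw [add_sub_cancel_right]
    _ ≤ ‖x + γ⁻¹ • v‖ + ‖γ⁻¹ • v‖ := norm_sub_le _ _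
  have hS : a ^ 2 ≤ 2 * P ^ 2 + 2 * (γ⁻¹ * b) ^ 2 := by
    nlinarith [sq_nonneg (P - γ⁻¹ * b), mul_nonneg hP (mul_nonneg (inv_pos.mpr hγ).le hb)]
  -- the lyapunov value divided by β
  have hLval : (β * F x + β / 4 * γ ^ 2 *
      (P ^ 2 + ‖γ⁻¹ • v‖ ^ 2 - lc * a ^ 2)) / β
      = F x + γ ^ 2 / 4 * (P ^ 2 + (γ⁻¹ * b) ^ 2 - lc * a ^ 2) := by
    rw [hu]; field_simp
  set L := (β * F x + β / 4 * γ ^ 2 *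
      (P ^ 2 + ‖γ⁻¹ • v‖ ^ 2 - lc * a ^ 2)) / β with hL_def
  have hLlb : (1 - 2 * lc) * (γ ^ 2 * a ^ 2 / 16 + b ^ 2 / 8) ≤ L := by
    rw [hLval]
    have hF0 := hFnn x
    have d1 : (0:ℝ) ≤ 2 * P ^ 2 + 2 * (γ⁻¹ * b) ^ 2 - a ^ 2 := by linarith
    have T : (1 - 2 * lc) * (a ^ 2 / 4 + (γ⁻¹ * b) ^ 2 / 2)
        ≤ P ^ 2 + (γ⁻¹ * b) ^ 2 - lc * a ^ 2 := by
      nlinarith [mul_nonneg hlc2.le d1, mul_nonneg hlc2.le (sq_nonneg P),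
        mul_nonneg hlc₀.le d1]
    have T2 := mul_le_mul_of_nonneg_left T (by positivity : (0:ℝ) ≤ γ ^ 2 / 4)
    have hq2' : lc * (γ ^ 2 * (γ⁻¹ * b) ^ 2) = lc * b ^ 2 := by rw [hq2]
    nlinarith [T2, hF0, hq2, hq2']
  have hLnn : 0 ≤ L := le_trans (by positivity) hLlb
  set K := max (16 * M ^ 2 * (3 + 2 * γ) / ((1 - 2 * lc) * γ ^ 2))
      (8 * (M / 2 + γ ^ 2 / 4 - γ ^ 2 * lc / 4 + γ) / (1 - 2 * lc)) with hK_def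
  have hK1 : 16 * M ^ 2 * (3 + 2 * γ) / ((1 - 2 * lc) * γ ^ 2) ≤ K := le_max_left _ _
  have hK2 : 8 * (M / 2 + γ ^ 2 / 4 - γ ^ 2 * lc / 4 + γ) / (1 - 2 * lc) ≤ K := le_max_right _ _
  have hA1 : 16 * M ^ 2 * (3 + 2 * γ) / ((1 - 2 * lc) * γ ^ 2) * ((1 - 2 * lc) * (γ ^ 2 * a ^ 2 / 16)) = M ^ 2 * (3 + 2 * γ) * a ^ 2 := by
    field_simp
  have hA2 : 8 * (M / 2 + γ ^ 2 / 4 - γ ^ 2 * lc / 4 + γ) / (1 - 2 * lc) * ((1 - 2 * lc) * (b ^ 2 / 8)) = (M / 2 + γ ^ 2 / 4 - γ ^ 2 * lc / 4 + γ) * b ^ 2 := by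
    field_simp
  have hKL : M ^ 2 * (3 + 2 * γ) * a ^ 2 + (M / 2 + γ ^ 2 / 4 - γ ^ 2 * lc / 4 + γ) * b ^ 2
      ≤ K * L := by
    calc M ^ 2 * (3 + 2 * γ) * a ^ 2 + (M / 2 + γ ^ 2 / 4 - γ ^ 2 * lc / 4 + γ) * b ^ 2
        = 16 * M ^ 2 * (3 + 2 * γ) / ((1 - 2 * lc) * γ ^ 2) * ((1 - 2 * lc) * (γ ^ 2 * a ^ 2 / 16))
          + 8 * (M / 2 + γ ^ 2 / 4 - γ ^ 2 * lc / 4 + γ) / (1 - 2 * lc) * ((1 - 2 * lc) * (b ^ 2 / 8)) := by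
          rw [hA1, hA2]
      _ ≤ K * ((1 - 2 * lc) * (γ ^ 2 * a ^ 2 / 16)) + K * ((1 - 2 * lc) * (b ^ 2 / 8)) := by
          gcongr <;> positivity
      _ = K * ((1 - 2 * lc) * (γ ^ 2 * a ^ 2 / 16 + b ^ 2 / 8)) := by ring
      _ ≤ K * L := by
          have hKnn : 0 ≤ K := le_trans (by positivity) hK1
          exact mul_le_mul_of_nonneg_left hLlb hKnn
  have hgv : ⟪gradient F x, v⟫_ℝ ≤ (M * a + B) * b := by
    calc ⟪gradient F x, v⟫_ℝ ≤ ‖gradient F x‖ * ‖v‖ := real_inner_le_norm _ _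
    _ ≤ (M * a + B) * b := mul_le_mul_of_nonneg_right (hgrad x) hb
  have hfinal : (M / 2 + γ ^ 2 / 4 - γ ^ 2 * lc / 4) * b ^ 2 +
      3 / 2 * (M * a + B) ^ 2 + γ / 2 * ⟪gradient F x, v⟫_ℝ ≤
      M ^ 2 * (3 + 2 * γ) * a ^ 2 + (M / 2 + γ ^ 2 / 4 - γ ^ 2 * lc / 4 + γ) * b ^ 2
      + B ^ 2 * (3 + 2 * γ) := by
    have h1 : γ / 2 * ⟪gradient F x, v⟫_ℝ ≤ γ / 2 * ((M * a + B) * b) :=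
      mul_le_mul_of_nonneg_left hgv (by positivity)
    have e1 : (M * a + B) ^ 2 ≤ 2 * M ^ 2 * a ^ 2 + 2 * B ^ 2 := by
      nlinarith [sq_nonneg (M * a - B)]
    have e2 : γ / 2 * ((M * a + B) * b) ≤ γ / 4 * (M * a + B) ^ 2 + γ / 4 * b ^ 2 := by
      nlinarith [mul_nonneg hγ.le (sq_nonneg (M * a + B - b))]
    have e3 : γ / 4 * (M * a + B) ^ 2 ≤ γ / 4 * (2 * M ^ 2 * a ^ 2 + 2 * B ^ 2) := by
      nlinarith [mul_nonneg hγ.le (sq_nonneg (M * a - B))]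
    have n1 : 0 ≤ γ * b ^ 2 := by positivity
    have n2 : 0 ≤ γ * (M ^ 2 * a ^ 2) := by positivity
    have n3 : 0 ≤ γ * B ^ 2 := by positivity
    linarith [h1, e1, e2, e3, n1, n2, n3]
  calc (M / 2 + γ ^ 2 / 4 - γ ^ 2 * lc / 4) * b ^ 2 +
      3 / 2 * (M * a + B) ^ 2 + γ / 2 * ⟪gradient F x, v⟫_ℝ
      ≤ M ^ 2 * (3 + 2 * γ) * a ^ 2 + (M / 2 + γ ^ 2 / 4 - γ ^ 2 * lc / 4 + γ) * b ^ 2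
        + B ^ 2 * (3 + 2 * γ) := hfinal
    _ ≤ K * L + B ^ 2 * (3 + 2 * γ) := by linarith
end
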